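/- Let q be a prime power, n, m ≥ 1 with gcd(m+n, q-1) = 1. Let f₁, f₂ ∈ 𝔽_q[x,y] be coprime homogeneous polynomials of degree n with f₁ having no yⁿ term, and let g ∈ 𝔽_q[x,y] be homogeneous of degree m whose only zero in 𝔽_q² is (0,0). Then (f₁·g, f₂·g) induces a bijection of 𝔽_q² if and only if t ↦ f₁(1,t)/f₂(1,t) induces a bijection of ℙ¹(𝔽_q). -/

import Mathlib

open MvPolynomial

section Aux
variable {F : Type*} [Field F]

lemma aux_eval_sum (N k : ℕ) (d : Fin k → F) (x y : F) :
    eval ![x, y] (∑ i : Fin k, C (d i) * X 0 ^ (N - (i : ℕ)) * X 1 ^ (i : ℕ)) =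
      ∑ i : Fin k, d i * x ^ (N - (i : ℕ)) * y ^ (i : ℕ) := by
  simp

lemma aux_homog (N k : ℕ) (hk : ∀ i : Fin k, (i : ℕ) ≤ N) (d : Fin k → F) (s x y : F) :
    eval ![s * x, s * y] (∑ i : Fin k, C (d i) * X 0 ^ (N - (i : ℕ)) * X 1 ^ (i : ℕ)) =
      s ^ N * eval ![x, y] (∑ i : Fin k, C (d i) * X 0 ^ (N - (i : ℕ)) * X 1 ^ (i : ℕ)) := by
  rw [aux_eval_sum, aux_eval_sum, Finset.mul_sum]
  refine Finset.sum_congr rfl fun i _ => ?_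
  have h := hk i
  rw [mul_pow, mul_pow]
  have : s ^ (N - (i : ℕ)) * s ^ (i : ℕ) = s ^ N := by
    rw [← pow_add, Nat.sub_add_cancel h]
  calc d i * (s ^ (N - (i:ℕ)) * x ^ (N - (i:ℕ))) * (s ^ (i:ℕ) * y ^ (i:ℕ))
      = (s ^ (N - (i:ℕ)) * s ^ (i:ℕ)) * (d i * x ^ (N - (i:ℕ)) * y ^ (i:ℕ)) := by ring
    _ = s ^ N * (d i * x ^ (N - (i:ℕ)) * y ^ (i:ℕ)) := by rw [this]

lemma aux_dvd (N k : ℕ) (hk : ∀ i : Fin k, (i : ℕ) ≤ N) (d : Fin k → F) (t : F)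
    (h : eval ![1, t] (∑ i : Fin k, C (d i) * X 0 ^ (N - (i : ℕ)) * X 1 ^ (i : ℕ)) = 0) :
    (X 1 - C t * X 0 : MvPolynomial (Fin 2) F) ∣
      (∑ i : Fin k, C (d i) * X 0 ^ (N - (i : ℕ)) * X 1 ^ (i : ℕ)) := by
  have key : (∑ i : Fin k, C (d i) * X 0 ^ (N - (i : ℕ)) * X 1 ^ (i : ℕ)) =
      (∑ i : Fin k, C (d i) * X 0 ^ (N - (i : ℕ)) *
        ((X 1 : MvPolynomial (Fin 2) F) ^ (i : ℕ) - (C t * X 0) ^ (i : ℕ))) +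
      C (eval ![1, t] (∑ i : Fin k, C (d i) * X 0 ^ (N - (i : ℕ)) * X 1 ^ (i : ℕ))) * X 0 ^ N := by
    rw [aux_eval_sum]
    rw [map_sum, Finset.sum_mul, ← Finset.sum_add_distrib]
    refine Finset.sum_congr rfl fun i _ => ?_
    have h := hk i
    rw [mul_pow, ← C_pow]
    have : (X 0 : MvPolynomial (Fin 2) F) ^ (N - (i : ℕ)) * X 0 ^ (i : ℕ) = X 0 ^ N := by
      rw [← pow_add, Nat.sub_add_cancel h]
    simp only [map_mul, map_pow, one_pow, mul_one]
    ring_nf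
    rw [← this]
    ring
  rw [h, map_zero, zero_mul, add_zero] at key
  have hd : (X 1 - C t * X 0) ∣ ∑ i : Fin k, C (d i) * X 0 ^ (N - (i : ℕ)) *
      ((X 1 : MvPolynomial (Fin 2) F) ^ (i : ℕ) - (C t * X 0) ^ (i : ℕ)) :=
    Finset.dvd_sum fun i _ => Dvd.dvd.mul_left (sub_dvd_pow_sub_pow _ _ _) _
  rw [← key] at hd; exact hd

end Aux

lemma aux_pow_bij {F : Type*} [Field F] [Fintype F] [DecidableEq F] (k : ℕ) (hk : 0 < k)
    (hgcd : Nat.gcd k (Fintype.card F - 1) = 1) :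
    Function.Bijective (fun x : F => x ^ k) := by
  rw [← Finite.injective_iff_bijective]
  have hc : (Nat.card Fˣ).Coprime k := by
    rw [Nat.card_eq_fintype_card, Fintype.card_units]
    exact (Nat.coprime_comm.mp hgcd)
  have hu := hc.pow_left_bijective
  intro x y h
  simp only at h
  by_cases hx : x = 0
  · subst hx
    rw [zero_pow hk.ne', eq_comm, pow_eq_zero_iff hk.ne'] at h
    exact h.symm
  · have hy : y ≠ 0 := by
      intro hy; subst hy
      rw [zero_pow hk.ne', pow_eq_zero_iff hk.ne'] at h
      exact hx h
    have : (Units.mk0 x hx) ^ k = (Units.mk0 y hy) ^ k := by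
      ext; simpa using h
    have := hu.injective this
    simpa [Units.ext_iff] using this

/-- Proposition 3.6: let gcd(m+n, q-1) = 1, let f₁, f₂ be coprime homogeneous forms
of degree n over 𝔽_q with f₁ = a₁xⁿ + ⋯ + a_n x y^{n-1} (no yⁿ term),
f₂ = b₁xⁿ + ⋯ + b_{n+1}yⁿ, and let g be homogeneous of degree m (m ≥ 1) whose only
zero in 𝔽_q² is (0,0).  Then (f₁·g, f₂·g) is a bijection of 𝔽_q² iff
t ↦ f₁(1,t)/f₂(1,t) is a bijection of ℙ¹(𝔽_q), modeled as `Option F` with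
`none` = ∞ (the map sends finite t with f₂(1,t) = 0 to ∞, and ∞ to 0 when
b_{n+1} ≠ 0, which holds under coprimality since x ∣ f₁). -/
theorem stmt_10 {F : Type*} [Field F] [Fintype F] [DecidableEq F]
    (n m : ℕ) (hn : 0 < n) (hm : 0 < m)
    (hgcd : Nat.gcd (m + n) (Fintype.card F - 1) = 1)
    (a : Fin n → F) (b : Fin (n + 1) → F) (c : Fin (m + 1) → F)
    (f₁ f₂ g : MvPolynomial (Fin 2) F)
    (hf₁ : f₁ = ∑ i : Fin n, C (a i) * X 0 ^ (n - (i : ℕ)) * X 1 ^ (i : ℕ))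
    (hf₂ : f₂ = ∑ i : Fin (n + 1), C (b i) * X 0 ^ (n - (i : ℕ)) * X 1 ^ (i : ℕ))
    (hg : g = ∑ i : Fin (m + 1), C (c i) * X 0 ^ (m - (i : ℕ)) * X 1 ^ (i : ℕ))
    (hgne : g ≠ 0)
    (hgzero : ∀ x y : F, eval ![x, y] g = 0 → x = 0 ∧ y = 0)
    (hcop : ∀ d : MvPolynomial (Fin 2) F, d ∣ f₁ → d ∣ f₂ → IsUnit d) :
    Function.Bijective (fun p : F × F =>
      (eval ![p.1, p.2] (f₁ * g), eval ![p.1, p.2] (f₂ * g))) ↔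
    Function.Bijective (fun t : Option F =>
      match t with
      | none => if b (Fin.last n) = 0 then none else some (0 : F)
      | some t =>
          if eval ![1, t] f₂ = 0 then none
          else some (eval ![1, t] f₁ / eval ![1, t] f₂)) := by
  classical
  have hk0 : 0 < m + n := by omega
  have hσ : Function.Bijective (fun x : F => x ^ (m + n)) := aux_pow_bij (m + n) hk0 hgcd
  have hσi : ∀ {x y : F}, x ^ (m + n) = y ^ (m + n) → x = y := fun h => hσ.injective h
  have hσs : ∀ z : F, ∃ s : F, s ^ (m + n) = z := fun z => hσ.surjective z
  have hb1 : ∀ i : Fin n, (i : ℕ) ≤ n := fun i => le_of_lt i.isLt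
  have hb2 : ∀ i : Fin (n + 1), (i : ℕ) ≤ n := fun i => Nat.lt_succ_iff.mp i.isLt
  have hb3 : ∀ i : Fin (m + 1), (i : ℕ) ≤ m := fun i => Nat.lt_succ_iff.mp i.isLt
  have H1 : ∀ s x y : F, eval ![s * x, s * y] f₁ = s ^ n * eval ![x, y] f₁ := by
    intro s x y; rw [hf₁]; exact aux_homog n n hb1 a s x y
  have H2 : ∀ s x y : F, eval ![s * x, s * y] f₂ = s ^ n * eval ![x, y] f₂ := by
    intro s x y; rw [hf₂]; exact aux_homog n (n + 1) hb2 b s x y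
  have H3 : ∀ s x y : F, eval ![s * x, s * y] g = s ^ m * eval ![x, y] g := by
    intro s x y; rw [hg]; exact aux_homog m (m + 1) hb3 c s x y
  -- evaluations at (0,1)
  have E01f₁ : eval ![(0 : F), 1] f₁ = 0 := by
    rw [hf₁, aux_eval_sum]
    refine Finset.sum_eq_zero fun i _ => ?_
    rw [zero_pow (by have := i.isLt; omega)]
    ring
  have E01f₂ : eval ![(0 : F), 1] f₂ = b (Fin.last n) := by
    rw [hf₂, aux_eval_sum]
    rw [Finset.sum_eq_single (Fin.last n)]
    · simp [Fin.last]
    · intro i _ hi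
      have hil : (i : ℕ) < n := by
        rcases Nat.lt_or_ge (i : ℕ) n with h | h
        · exact h
        · exact absurd (Fin.ext (by have := hb2 i; simp [Fin.last]; omega)) hi
      rw [zero_pow (by omega)]; ring
    · simp
  -- scaled evaluations
  have HX1 : ∀ s t : F, eval ![s, s * t] f₁ = s ^ n * eval ![1, t] f₁ := by
    intro s t; have := H1 s 1 t; rwa [mul_one] at this
  have HX2 : ∀ s t : F, eval ![s, s * t] f₂ = s ^ n * eval ![1, t] f₂ := by
    intro s t; have := H2 s 1 t; rwa [mul_one] at this
  have HXg : ∀ s t : F, eval ![s, s * t] g = s ^ m * eval ![1, t] g := by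
    intro s t; have := H3 s 1 t; rwa [mul_one] at this
  have HY1 : ∀ s : F, eval ![(0 : F), s] f₁ = 0 := by
    intro s; have := H1 s 0 1; rw [mul_zero, mul_one, E01f₁, mul_zero] at this; exact this
  have HY2 : ∀ s : F, eval ![(0 : F), s] f₂ = s ^ n * b (Fin.last n) := by
    intro s; have := H2 s 0 1; rwa [mul_zero, mul_one, E01f₂] at this
  have HYg : ∀ s : F, eval ![(0 : F), s] g = s ^ m * eval ![(0 : F), 1] g := by
    intro s; have := H3 s 0 1; rwa [mul_zero, mul_one] at this
  -- g nonvanishing away from origin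
  have Gne : ∀ t : F, eval ![1, t] g ≠ 0 := fun t h => one_ne_zero (hgzero 1 t h).1
  have Gine : eval ![(0 : F), 1] g ≠ 0 := fun h => one_ne_zero (hgzero 0 1 h).2
  -- no common root
  have NCR : ∀ t : F, eval ![1, t] f₁ = 0 → eval ![1, t] f₂ = 0 → False := by
    intro t h1 h2
    have d1 : (X 1 - C t * X 0 : MvPolynomial (Fin 2) F) ∣ f₁ := by
      rw [hf₁]; exact aux_dvd n n hb1 a t (by rw [← hf₁]; exact h1)
    have d2 : (X 1 - C t * X 0 : MvPolynomial (Fin 2) F) ∣ f₂ := by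
      rw [hf₂]; exact aux_dvd n (n + 1) hb2 b t (by rw [← hf₂]; exact h2)
    have h3 := (hcop _ d1 d2).map (eval ![(0 : F), 0])
    simp [isUnit_iff_ne_zero] at h3
  have Bne : b (Fin.last n) ≠ 0 := by
    intro h
    have d1 : (X 0 : MvPolynomial (Fin 2) F) ∣ f₁ := by
      rw [hf₁]
      refine Finset.dvd_sum fun i _ => ?_
      exact Dvd.dvd.mul_right (Dvd.dvd.mul_left (dvd_pow_self _ (by have := i.isLt; omega)) _) _
    have d2 : (X 0 : MvPolynomial (Fin 2) F) ∣ f₂ := by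
      rw [hf₂]
      refine Finset.dvd_sum fun i _ => ?_
      by_cases hi : i = Fin.last n
      · subst hi; rw [h]; simp
      · have hil : (i : ℕ) < n := by
          rcases Nat.lt_or_ge (i : ℕ) n with h' | h'
          · exact h'
          · exact absurd (Fin.ext (by have := hb2 i; simp [Fin.last]; omega)) hi
        exact Dvd.dvd.mul_right (Dvd.dvd.mul_left (dvd_pow_self _ (by omega)) _) _
    have h3 := (hcop _ d1 d2).map (eval ![(0 : F), 0])
    simp [isUnit_iff_ne_zero] at h3
  -- products
  have PHI1 : ∀ s t : F, eval ![s, s * t] (f₁ * g) =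
      s ^ (m + n) * (eval ![1, t] f₁ * eval ![1, t] g) := by
    intro s t
    rw [eval_mul, HX1, HXg, show m + n = n + m from Nat.add_comm m n, pow_add]
    ring
  have PHI2 : ∀ s t : F, eval ![s, s * t] (f₂ * g) =
      s ^ (m + n) * (eval ![1, t] f₂ * eval ![1, t] g) := by
    intro s t
    rw [eval_mul, HX2, HXg, show m + n = n + m from Nat.add_comm m n, pow_add]
    ring
  have PHI0 : ∀ s : F, eval ![(0 : F), s] (f₁ * g) = 0 := by
    intro s; rw [eval_mul, HY1, zero_mul]
  have PHI0' : ∀ s : F, eval ![(0 : F), s] (f₂ * g) =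
      s ^ (m + n) * (b (Fin.last n) * eval ![(0 : F), 1] g) := by
    intro s
    rw [eval_mul, HY2, HYg, show m + n = n + m from Nat.add_comm m n, pow_add]
    ring
  rw [← Finite.injective_iff_bijective, ← Finite.injective_iff_bijective]
  constructor
  · intro hΦ t₁ t₂ hφ
    simp only at hφ
    rcases t₁ with _ | u <;> rcases t₂ with _ | v
    · rfl
    · -- none vs some v
      exfalso
      replace hφ : (if b (Fin.last n) = 0 then (none : Option F) else some 0) =
          (if eval ![1, v] f₂ = 0 then none
            else some (eval ![1, v] f₁ / eval ![1, v] f₂)) := hφ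
      rw [if_neg Bne] at hφ
      by_cases h2 : eval ![1, v] f₂ = 0
      · rw [if_pos h2] at hφ; exact nomatch hφ
      rw [if_neg h2] at hφ
      have h1 : eval ![1, v] f₁ = 0 := by
        have h' := Option.some.inj hφ
        rw [eq_comm, div_eq_zero_iff] at h'
        tauto
      obtain ⟨s, hs⟩ := hσs ((eval ![1, v] f₂ * eval ![1, v] g) /
        (b (Fin.last n) * eval ![(0 : F), 1] g))
      have c1 : eval ![(0 : F), s] (f₁ * g) = eval ![(1 : F), v] (f₁ * g) := by
        have hv := PHI1 1 v; rw [one_mul] at hv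
        rw [PHI0, hv, h1]; ring
      have c2 : eval ![(0 : F), s] (f₂ * g) = eval ![(1 : F), v] (f₂ * g) := by
        have hv := PHI2 1 v; rw [one_mul] at hv
        rw [PHI0', hs, hv, one_pow, one_mul]
        rw [div_mul_cancel₀]
        exact mul_ne_zero Bne Gine
      have key : (eval ![((0 : F), s).1, ((0 : F), s).2] (f₁ * g),
            eval ![((0 : F), s).1, ((0 : F), s).2] (f₂ * g)) =
          (eval ![((1 : F), v).1, ((1 : F), v).2] (f₁ * g),
            eval ![((1 : F), v).1, ((1 : F), v).2] (f₂ * g)) := by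
        simp only [Prod.mk.injEq]
        exact ⟨c1, c2⟩
      have := hΦ key
      simp [Prod.ext_iff] at this
    · -- some u vs none
      exfalso
      replace hφ : (if eval ![1, u] f₂ = 0 then (none : Option F)
            else some (eval ![1, u] f₁ / eval ![1, u] f₂)) =
          (if b (Fin.last n) = 0 then none else some 0) := hφ
      rw [if_neg Bne] at hφ
      by_cases h2 : eval ![1, u] f₂ = 0
      · rw [if_pos h2] at hφ; exact nomatch hφ
      rw [if_neg h2] at hφ
      have h1 : eval ![1, u] f₁ = 0 := by
        have h' := Option.some.inj hφ
        rw [div_eq_zero_iff] at h'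
        tauto
      obtain ⟨s, hs⟩ := hσs ((eval ![1, u] f₂ * eval ![1, u] g) /
        (b (Fin.last n) * eval ![(0 : F), 1] g))
      have c1 : eval ![(0 : F), s] (f₁ * g) = eval ![(1 : F), u] (f₁ * g) := by
        have hv := PHI1 1 u; rw [one_mul] at hv
        rw [PHI0, hv, h1]; ring
      have c2 : eval ![(0 : F), s] (f₂ * g) = eval ![(1 : F), u] (f₂ * g) := by
        have hv := PHI2 1 u; rw [one_mul] at hv
        rw [PHI0', hs, hv, one_pow, one_mul]
        rw [div_mul_cancel₀]
        exact mul_ne_zero Bne Gine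
      have key : (eval ![((0 : F), s).1, ((0 : F), s).2] (f₁ * g),
            eval ![((0 : F), s).1, ((0 : F), s).2] (f₂ * g)) =
          (eval ![((1 : F), u).1, ((1 : F), u).2] (f₁ * g),
            eval ![((1 : F), u).1, ((1 : F), u).2] (f₂ * g)) := by
        simp only [Prod.mk.injEq]
        exact ⟨c1, c2⟩
      have := hΦ key
      simp [Prod.ext_iff] at this
    · -- some u vs some v
      replace hφ : (if eval ![1, u] f₂ = 0 then (none : Option F)
            else some (eval ![1, u] f₁ / eval ![1, u] f₂)) =
          (if eval ![1, v] f₂ = 0 then none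
            else some (eval ![1, v] f₁ / eval ![1, v] f₂)) := hφ
      congr 1
      by_cases h2u : eval ![1, u] f₂ = 0
      · rw [if_pos h2u] at hφ
        have h2v : eval ![1, v] f₂ = 0 := by
          by_contra h2v
          rw [if_neg h2v] at hφ; exact nomatch hφ
        have h1u : eval ![1, u] f₁ ≠ 0 := fun h => NCR u h h2u
        have h1v : eval ![1, v] f₁ ≠ 0 := fun h => NCR v h h2v
        obtain ⟨s, hs⟩ := hσs ((eval ![1, v] f₁ * eval ![1, v] g) /
          (eval ![1, u] f₁ * eval ![1, u] g))
        have c1 : eval ![s, s * u] (f₁ * g) = eval ![(1 : F), v] (f₁ * g) := by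
          have hv := PHI1 1 v; rw [one_mul] at hv
          rw [PHI1, hs, hv, one_pow, one_mul, div_mul_cancel₀]
          exact mul_ne_zero h1u (Gne u)
        have c2 : eval ![s, s * u] (f₂ * g) = eval ![(1 : F), v] (f₂ * g) := by
          have hv := PHI2 1 v; rw [one_mul] at hv
          rw [PHI2, hv, h2u, h2v, one_pow]; ring
        have key : (eval ![(s, s * u).1, (s, s * u).2] (f₁ * g),
              eval ![(s, s * u).1, (s, s * u).2] (f₂ * g)) =
            (eval ![((1 : F), v).1, ((1 : F), v).2] (f₁ * g),
              eval ![((1 : F), v).1, ((1 : F), v).2] (f₂ * g)) := by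
          simp only [Prod.mk.injEq]
          exact ⟨c1, c2⟩
        have hpq := hΦ key
        rw [Prod.ext_iff] at hpq
        obtain ⟨hs1, hs2⟩ := hpq
        simp only at hs1 hs2
        rw [hs1, one_mul] at hs2
        exact hs2
      · rw [if_neg h2u] at hφ
        have h2v : eval ![1, v] f₂ ≠ 0 := by
          intro h2v
          rw [if_pos h2v] at hφ; exact nomatch hφ
        rw [if_neg h2v] at hφ
        have hdd := Option.some.inj hφ
        rw [div_eq_div_iff h2u h2v] at hdd
        obtain ⟨s, hs⟩ := hσs ((eval ![1, v] f₂ * eval ![1, v] g) /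
          (eval ![1, u] f₂ * eval ![1, u] g))
        have c2 : eval ![s, s * u] (f₂ * g) = eval ![(1 : F), v] (f₂ * g) := by
          have hv := PHI2 1 v; rw [one_mul] at hv
          rw [PHI2, hs, hv, one_pow, one_mul, div_mul_cancel₀]
          exact mul_ne_zero h2u (Gne u)
        have c1 : eval ![s, s * u] (f₁ * g) = eval ![(1 : F), v] (f₁ * g) := by
          have hv := PHI1 1 v; rw [one_mul] at hv
          rw [PHI1, hs, hv, one_pow, one_mul]
          rw [div_mul_eq_mul_div, div_eq_iff (mul_ne_zero h2u (Gne u))]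
          linear_combination (eval ![1, v]) g * (eval ![1, u]) g * hdd
        have key : (eval ![(s, s * u).1, (s, s * u).2] (f₁ * g),
              eval ![(s, s * u).1, (s, s * u).2] (f₂ * g)) =
            (eval ![((1 : F), v).1, ((1 : F), v).2] (f₁ * g),
              eval ![((1 : F), v).1, ((1 : F), v).2] (f₂ * g)) := by
          simp only [Prod.mk.injEq]
          exact ⟨c1, c2⟩
        have hpq := hΦ key
        rw [Prod.ext_iff] at hpq
        obtain ⟨hs1, hs2⟩ := hpq
        simp only at hs1 hs2
        rw [hs1, one_mul] at hs2
        exact hs2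
  · intro hφ p p' hp
    obtain ⟨x, y⟩ := p
    obtain ⟨x', y'⟩ := p'
    simp only [Prod.mk.injEq] at hp ⊢
    obtain ⟨hp1, hp2⟩ := hp
    by_cases hx : x = 0 <;> by_cases hx' : x' = 0
    · subst hx; subst hx'
      refine ⟨rfl, ?_⟩
      rw [PHI0' y, PHI0' y'] at hp2
      exact hσi (mul_right_cancel₀ (mul_ne_zero Bne Gine) hp2)
    · -- x = 0, x' ≠ 0 : impossible
      exfalso
      subst hx
      have hy' : y' = x' * (y' / x') := by field_simp
      rw [hy'] at hp1 hp2
      rw [PHI0, PHI1] at hp1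
      rw [PHI0', PHI2] at hp2
      have hxk' : x' ^ (m + n) ≠ 0 := pow_ne_zero _ hx'
      have hE1 : eval ![1, y' / x'] f₁ = 0 := by
        rcases mul_eq_zero.mp hp1.symm with h | h
        · exact absurd h hxk'
        · rcases mul_eq_zero.mp h with h | h
          · exact h
          · exact absurd h (Gne _)
      have hE2 : eval ![1, y' / x'] f₂ ≠ 0 := fun h => NCR _ hE1 h
      have hcon : (some (y' / x') : Option F) = none := by
        apply hφ
        show (if eval ![1, y' / x'] f₂ = 0 then (none : Option F)
            else some (eval ![1, y' / x'] f₁ / eval ![1, y' / x'] f₂)) =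
          (if b (Fin.last n) = 0 then none else some 0)
        rw [if_neg hE2, if_neg Bne, hE1, zero_div]
      exact nomatch hcon
    · -- x ≠ 0, x' = 0 : impossible
      exfalso
      subst hx'
      have hy : y = x * (y / x) := by field_simp
      rw [hy] at hp1 hp2
      rw [PHI1, PHI0] at hp1
      rw [PHI2, PHI0'] at hp2
      have hxk : x ^ (m + n) ≠ 0 := pow_ne_zero _ hx
      have hE1 : eval ![1, y / x] f₁ = 0 := by
        rcases mul_eq_zero.mp hp1 with h | h
        · exact absurd h hxk
        · rcases mul_eq_zero.mp h with h | h
          · exact h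
          · exact absurd h (Gne _)
      have hE2 : eval ![1, y / x] f₂ ≠ 0 := fun h => NCR _ hE1 h
      have hcon : (some (y / x) : Option F) = none := by
        apply hφ
        show (if eval ![1, y / x] f₂ = 0 then (none : Option F)
            else some (eval ![1, y / x] f₁ / eval ![1, y / x] f₂)) =
          (if b (Fin.last n) = 0 then none else some 0)
        rw [if_neg hE2, if_neg Bne, hE1, zero_div]
      exact nomatch hcon
    · -- both nonzero
      have hy : y = x * (y / x) := by field_simp
      have hy' : y' = x' * (y' / x') := by field_simp
      rw [hy] at hp1 hp2
      rw [hy'] at hp1 hp2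
      rw [PHI1, PHI1] at hp1
      rw [PHI2, PHI2] at hp2
      have hxk : x ^ (m + n) ≠ 0 := pow_ne_zero _ hx
      have hxk' : x' ^ (m + n) ≠ 0 := pow_ne_zero _ hx'
      have hsame : y / x = y' / x' := by
        apply Option.some.inj
        apply hφ
        show (if eval ![1, y / x] f₂ = 0 then (none : Option F)
            else some (eval ![1, y / x] f₁ / eval ![1, y / x] f₂)) =
          (if eval ![1, y' / x'] f₂ = 0 then none
            else some (eval ![1, y' / x'] f₁ / eval ![1, y' / x'] f₂))
        by_cases hE2 : eval ![1, y / x] f₂ = 0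
        · have hE2' : eval ![1, y' / x'] f₂ = 0 := by
            rw [hE2, zero_mul, mul_zero] at hp2
            rcases mul_eq_zero.mp hp2.symm with h | h
            · exact absurd h hxk'
            · rcases mul_eq_zero.mp h with h | h
              · exact h
              · exact absurd h (Gne _)
          rw [if_pos hE2, if_pos hE2']
        · have hE2' : eval ![1, y' / x'] f₂ ≠ 0 := by
            intro h
            rw [h, zero_mul, mul_zero] at hp2
            rcases mul_eq_zero.mp hp2 with h' | h'
            · exact hxk h'
            · rcases mul_eq_zero.mp h' with h'' | h''
              · exact hE2 h''
              · exact Gne _ h''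
          rw [if_neg hE2, if_neg hE2']
          congr 1
          rw [div_eq_div_iff hE2 hE2']
          apply mul_left_cancel₀ (mul_ne_zero hxk (Gne (y / x)))
          linear_combination (eval ![1, y' / x'] f₂) * hp1 -
            (eval ![1, y' / x'] f₁) * hp2
      have hx_eq : x = x' := by
        by_cases hE2 : eval ![1, y / x] f₂ = 0
        · have hE1 : eval ![1, y / x] f₁ ≠ 0 := fun h => NCR _ h hE2
          rw [← hsame] at hp1
          exact hσi (mul_right_cancel₀ (mul_ne_zero hE1 (Gne _)) hp1)
        · rw [← hsame] at hp2
          exact hσi (mul_right_cancel₀ (mul_ne_zero hE2 (Gne _)) hp2)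
      refine ⟨hx_eq, ?_⟩
      rw [hy, hy', hsame, hx_eq]
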